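/- Let k ≥ 1, let ι be a finite nonempty index set, let γ_i, η_i : Fin k → ℝ for i ∈ ι, and let A, B : Fin k → ℝ satisfy ⟨A,γ_i⟩ > 0 and ⟨B,γ_i⟩ > 0 for every i ∈ ι. Define λ(X) = max over i ∈ ι of ⟨X,η_i⟩/⟨X,γ_i⟩. Then for every t ∈ [0,1], λ(A_t) ≤ max (λ(A)) (λ(B)), where A_t = t•B + (1−t)•A. -/

import Mathlib

open Finset

/-- The displacement function on a simplex: the maximum over the (finitely many)
candidates `i` of the stretching factors `⟨X,η i⟩/⟨X,γ i⟩`. -/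
noncomputable def lamFun {k : ℕ} {ι : Type} [Fintype ι] [Nonempty ι]
    (γ η : ι → Fin k → ℝ) (X : Fin k → ℝ) : ℝ :=
  Finset.univ.sup' Finset.univ_nonempty
    (fun i => (∑ j, X j * η i j) / (∑ j, X j * γ i j))

/-- Quasi-convexity of the displacement function on Euclidean segments:
`λ(A_t) ≤ max (λ A) (λ B)` for `t ∈ [0,1]`, where `A_t = t•B + (1-t)•A`. -/
theorem displacement_quasiconvex_on_segment
    (k : ℕ) (hk : 1 ≤ k) (ι : Type) [Fintype ι] [Nonempty ι]
    (γ η : ι → Fin k → ℝ) (A B : Fin k → ℝ)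
    (hA : ∀ i : ι, 0 < ∑ j, A j * γ i j)
    (hB : ∀ i : ι, 0 < ∑ j, B j * γ i j) :
    ∀ t ∈ Set.Icc (0:ℝ) 1,
      lamFun γ η (fun j => t * B j + (1 - t) * A j) ≤
        max (lamFun γ η A) (lamFun γ η B) := by
  intro t ht
  obtain ⟨ht0, ht1⟩ := ht
  apply Finset.sup'_le
  intro i _
  have ha := hA i
  have hb := hB i
  have hnum : (∑ j, (t * B j + (1 - t) * A j) * η i j)
      = t * (∑ j, B j * η i j) + (1 - t) * (∑ j, A j * η i j) := by
    rw [Finset.mul_sum, Finset.mul_sum, ← Finset.sum_add_distrib]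
    congr 1; ext j; ring
  have hden : (∑ j, (t * B j + (1 - t) * A j) * γ i j)
      = t * (∑ j, B j * γ i j) + (1 - t) * (∑ j, A j * γ i j) := by
    rw [Finset.mul_sum, Finset.mul_sum, ← Finset.sum_add_distrib]
    congr 1; ext j; ring
  rw [hnum, hden]
  set a := ∑ j, B j * γ i j
  set b := ∑ j, B j * η i j
  set c := ∑ j, A j * γ i j
  set d := ∑ j, A j * η i j
  have hdenpos : 0 < t * a + (1 - t) * c := by
    rcases eq_or_lt_of_le ht0 with h | h
    · simp [← h, hA i, ha]
    · have : 0 ≤ (1 - t) * c := mul_nonneg (by linarith) (le_of_lt ha)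
      nlinarith
  set M := max (lamFun γ η A) (lamFun γ η B) with hM
  have hAle : d / c ≤ M := le_max_of_le_left (Finset.le_sup' (fun i => (∑ j, A j * η i j) / (∑ j, A j * γ i j)) (Finset.mem_univ i))
  have hBle : b / a ≤ M := le_max_of_le_right (Finset.le_sup' (fun i => (∑ j, B j * η i j) / (∑ j, B j * γ i j)) (Finset.mem_univ i))
  have hd : d ≤ M * c := by rwa [div_le_iff₀ ha] at hAle
  have hb2 : b ≤ M * a := by rwa [div_le_iff₀ hb] at hBle
  rw [div_le_iff₀ hdenpos]
  have h1 : t * b ≤ t * (M * a) := mul_le_mul_of_nonneg_left hb2 ht0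
  have h2 : (1 - t) * d ≤ (1 - t) * (M * c) :=
    mul_le_mul_of_nonneg_left hd (by linarith)
  nlinarith
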